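/- The gradient of h at every x ∈ ℝⁿ equals ∇h(x) = ‖x‖² x + (Σ_{i=1}^m Σ_{j=1}^m w_ij (2 s_j s_iᵀ + (s_iᵀ s_i − d_i²) I)) x − Σ_{i=1}^m Σ_{j=1}^m w_ij (s_iᵀ s_i − d_i²) s_j; that is, under the normalization and centering assumptions on the weights and senders, the cubic term of ∇h has coefficient 1 and the quadratic term vanishes. -/

import Mathlib

open RealInnerProductSpace


lemma aux_scalar17 {m : ℕ} (w : Fin m → Fin m → ℝ) (A B C : Fin m → ℝ) (P Q : ℝ)
    (hsym : ∀ i j, w i j = w j i)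
    (hw : ∑ i : Fin m, ∑ j : Fin m, w i j = 1)
    (hA : ∑ i : Fin m, ∑ j : Fin m, w i j * A i = 0)
    (hB : ∑ i : Fin m, ∑ j : Fin m, w i j * B j = 0) :
    1/4 * ∑ i : Fin m, ∑ j : Fin m, w i j *
        ((P - 2*A i + C i) * (2*(Q - B j)) + (P - 2*A j + C j) * (2*(Q - B i)))
    = P*Q + ∑ i : Fin m, ∑ j : Fin m, w i j * (2*A i*B j + C i*Q)
        - ∑ i : Fin m, ∑ j : Fin m, (w i j * C i) * B j := by
  have hswap : ∑ i : Fin m, ∑ j : Fin m, w i j * ((P - 2*A j + C j) * (2*(Q - B i)))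
      = ∑ i : Fin m, ∑ j : Fin m, w i j * ((P - 2*A i + C i) * (2*(Q - B j))) := by
    rw [Finset.sum_comm]
    exact Finset.sum_congr rfl fun i _ => Finset.sum_congr rfl fun j _ => by rw [hsym]
  have split : ∑ i : Fin m, ∑ j : Fin m, w i j *
        ((P - 2*A i + C i) * (2*(Q - B j)) + (P - 2*A j + C j) * (2*(Q - B i)))
      = ∑ i : Fin m, ∑ j : Fin m, w i j * ((P - 2*A i + C i) * (2*(Q - B j)))
        + ∑ i : Fin m, ∑ j : Fin m, w i j * ((P - 2*A j + C j) * (2*(Q - B i))) := by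
    simp only [mul_add, Finset.sum_add_distrib]
  have expand : ∑ i : Fin m, ∑ j : Fin m, w i j * ((P - 2*A i + C i) * (2*(Q - B j)))
      = 2*P*Q*(∑ i : Fin m, ∑ j : Fin m, w i j)
        - 2*P*(∑ i : Fin m, ∑ j : Fin m, w i j * B j)
        - 4*Q*(∑ i : Fin m, ∑ j : Fin m, w i j * A i)
        + 2*(∑ i : Fin m, ∑ j : Fin m, w i j * (2*A i*B j + C i*Q))
        - 2*(∑ i : Fin m, ∑ j : Fin m, (w i j * C i) * B j) := by
    simp only [Finset.mul_sum, ← Finset.sum_sub_distrib, ← Finset.sum_add_distrib]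
    refine Finset.sum_congr rfl fun i _ => Finset.sum_congr rfl fun j _ => ?_
    ring
  rw [split, hswap, expand, hw, hA, hB]
  ring

open RealInnerProductSpace

theorem stmt17 {n m : ℕ} (hn : 0 < n) (hm : 0 < m)
    (s : Fin m → EuclideanSpace ℝ (Fin n)) (d : Fin m → ℝ)
    (w : Fin m → Fin m → ℝ)
    (hsym : ∀ i j, w i j = w j i)
    (hnorm : ∑ i : Fin m, ∑ j : Fin m, w i j = 1)
    (hcent : ∑ i : Fin m, ∑ j : Fin m, w i j • s i = 0) :
    ∀ x : EuclideanSpace ℝ (Fin n),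
      gradient (fun x : EuclideanSpace ℝ (Fin n) =>
          (1/4) * ∑ i : Fin m, ∑ j : Fin m,
            w i j * ((‖x - s i‖^2 - (d i)^2) * (‖x - s j‖^2 - (d j)^2))) x
        = ‖x‖^2 • x
          + ∑ i : Fin m, ∑ j : Fin m,
              w i j • ((2 * ⟪s i, x⟫) • s j + (⟪s i, s i⟫ - (d i)^2) • x)
          - ∑ i : Fin m, ∑ j : Fin m,
              (w i j * (⟪s i, s i⟫ - (d i)^2)) • s j := by
  intro x
  have hgrad : ∀ (a : Fin m → EuclideanSpace ℝ (Fin n)) (k : Fin m),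
      HasFDerivAt (fun y : EuclideanSpace ℝ (Fin n) => ‖y - a k‖^2 - (d k)^2)
        ((2:ℝ) • (innerSL ℝ (x - a k))) x := by
    intro a k
    have h1 : HasFDerivAt (fun y : EuclideanSpace ℝ (Fin n) => y - a k)
        (ContinuousLinearMap.id ℝ _) x := (hasFDerivAt_id x).sub_const (a k)
    have h2 := (h1.inner ℝ h1).sub_const ((d k)^2)
    have hfun : (fun y : EuclideanSpace ℝ (Fin n) => ‖y - a k‖^2 - (d k)^2)
        = fun y => ⟪y - a k, y - a k⟫ - (d k)^2 := by
      funext y; rw [real_inner_self_eq_norm_sq]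
    rw [hfun]
    refine h2.congr_fderiv ?_
    ext t
    simp only [ContinuousLinearMap.smul_apply, innerSL_apply_apply, smul_eq_mul,
      ContinuousLinearMap.comp_apply, ContinuousLinearMap.prod_apply,
      ContinuousLinearMap.coe_id', id_eq, fderivInnerCLM_apply]
    rw [real_inner_comm t (x - a k)]
    ring
  have hh : HasFDerivAt (fun y : EuclideanSpace ℝ (Fin n) =>
      (1/4) * ∑ i : Fin m, ∑ j : Fin m,
        w i j * ((‖y - s i‖^2 - (d i)^2) * (‖y - s j‖^2 - (d j)^2)))
      ((1/4 : ℝ) • ∑ i : Fin m, ∑ j : Fin m, w i j •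
        ((‖x - s i‖^2 - (d i)^2) • ((2:ℝ) • innerSL ℝ (x - s j)) +
         (‖x - s j‖^2 - (d j)^2) • ((2:ℝ) • innerSL ℝ (x - s i)))) x := by
    refine HasFDerivAt.const_mul ?_ (1/4)
    refine HasFDerivAt.fun_sum fun i _ => ?_
    refine HasFDerivAt.fun_sum fun j _ => ?_
    exact ((hgrad s i).mul (hgrad s j)).const_mul (w i j)
  have hgr := (hasFDerivAt_iff_hasGradientAt.mp hh).gradient
  rw [hgr]
  apply (InnerProductSpace.toDual ℝ (EuclideanSpace ℝ (Fin n))).injective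
  rw [LinearIsometryEquiv.apply_symm_apply]
  ext t
  simp only [ContinuousLinearMap.smul_apply, ContinuousLinearMap.coe_sum',
    Finset.sum_apply, ContinuousLinearMap.add_apply, innerSL_apply_apply,
    InnerProductSpace.toDual_apply_apply, smul_eq_mul]
  have key1 : ∀ v : EuclideanSpace ℝ (Fin n),
      ∑ i : Fin m, ∑ j : Fin m, w i j * ⟪s i, v⟫ = 0 := by
    intro v
    have h := congrArg (fun y : EuclideanSpace ℝ (Fin n) => (⟪y, v⟫ : ℝ)) hcent
    simp only [sum_inner, real_inner_smul_left, inner_zero_left] at h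
    exact h
  have key2 : ∀ v : EuclideanSpace ℝ (Fin n),
      ∑ i : Fin m, ∑ j : Fin m, w i j * ⟪s j, v⟫ = 0 := by
    intro v
    rw [Finset.sum_comm]
    rw [show ∑ j : Fin m, ∑ i : Fin m, w i j * ⟪s j, v⟫
        = ∑ j : Fin m, ∑ i : Fin m, w j i * ⟪s j, v⟫ from
      Finset.sum_congr rfl fun j _ => Finset.sum_congr rfl fun i _ => by rw [hsym]]
    exact key1 v
  have e1 : ∑ i : Fin m, ∑ j : Fin m, w i j *
        ((‖x - s i‖ ^ 2 - d i ^ 2) * (2 * (⟪x, t⟫ - ⟪s j, t⟫)) +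
          (‖x - s j‖ ^ 2 - d j ^ 2) * (2 * (⟪x, t⟫ - ⟪s i, t⟫)))
      = ∑ i : Fin m, ∑ j : Fin m, w i j *
        ((‖x‖^2 - 2*⟪s i, x⟫ + (⟪s i, s i⟫ - d i ^ 2)) * (2*(⟪x, t⟫ - ⟪s j, t⟫)) +
          (‖x‖^2 - 2*⟪s j, x⟫ + (⟪s j, s j⟫ - d j ^ 2)) * (2*(⟪x, t⟫ - ⟪s i, t⟫))) := by
    refine Finset.sum_congr rfl fun i _ => Finset.sum_congr rfl fun j _ => ?_
    rw [norm_sub_sq_real, norm_sub_sq_real,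
      real_inner_comm x (s i), real_inner_comm x (s j),
      ← real_inner_self_eq_norm_sq (s i), ← real_inner_self_eq_norm_sq (s j)]
    ring
  have goal' := aux_scalar17 w (fun i => ⟪s i, x⟫) (fun i => ⟪s i, t⟫)
    (fun i => ⟪s i, s i⟫ - d i ^ 2) (‖x‖^2) ⟪x, t⟫ hsym hnorm (key1 x) (key2 t)
  simp only [inner_sub_left, inner_add_left, sum_inner, real_inner_smul_left]
  rw [e1, goal']
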